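/- Let n ≥ 1 be an integer and let χ : A → ℂ be a ℚ-algebra homomorphism from the group algebra A = ℚ[ℚ/ℤ] to the complex numbers. Then the composite χ ∘ ρₙ is not identically zero if and only if χ(e_{1/n}) = 1, where 1/n denotes the class of (n)⁻¹ ∈ ℚ in ℚ/ℤ (equivalently, if and only if χ(e_s) = 1 for every s ∈ ℚ/ℤ with n • s = 0). -/

import Mathlib

open AddMonoidAlgebra

/-- The rational group algebra `A = ℚ[ℚ/ℤ]` of `ℚ/ℤ = AddCircle (1 : ℚ)`. -/
abbrev BC.A : Type := AddMonoidAlgebra ℚ (AddCircle (1 : ℚ))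

/-- The Bost–Connes map `ρₙ : A → A`, the `ℚ`-linear map determined on the canonical
basis elements `e_r = single r 1` by `ρₙ(e_r) = (1/n) ∑_{s : n • s = r} e_s`, the
(finite) sum running over the `n` solutions `s ∈ ℚ/ℤ` of `n • s = r`. -/
noncomputable def BC.rho (n : ℕ) : BC.A →ₗ[ℚ] BC.A :=
  (Finsupp.lift BC.A ℚ (AddCircle (1 : ℚ)) fun r =>
    (n : ℚ)⁻¹ • ∑ᶠ (s : AddCircle (1 : ℚ)) (_ : n • s = r), AddMonoidAlgebra.single s (1 : ℚ)) ∘ₗ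
    (AddMonoidAlgebra.coeffLinearEquiv ℚ).toLinearMap

namespace BCAux

/-- The finset of `n`-torsion points of `ℚ/ℤ`. -/
noncomputable def Tfin (n : ℕ) : Finset (AddCircle (1 : ℚ)) :=
  (Finset.range n).image (fun k : ℕ => (((k : ℚ) / (n : ℚ) : ℚ) : AddCircle (1 : ℚ)))

lemma coe_eq_zero {q : ℚ} : ((q : AddCircle (1 : ℚ)) = 0) ↔ ∃ m : ℤ, (m : ℚ) = q := by
  rw [AddCircle.coe_eq_zero_iff]
  simp [zsmul_eq_mul]

lemma nsmul_coe (n : ℕ) (x : ℚ) :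
    n • ((x : ℚ) : AddCircle (1 : ℚ)) = ((n • x : ℚ) : AddCircle (1 : ℚ)) := rfl

lemma coe_sub (x y : ℚ) :
    ((x - y : ℚ) : AddCircle (1 : ℚ)) = (x : AddCircle (1:ℚ)) - (y : AddCircle (1:ℚ)) := rfl

lemma mem_Tfin {n : ℕ} (hn : 1 ≤ n) {t : AddCircle (1 : ℚ)} :
    t ∈ Tfin n ↔ n • t = 0 := by
  have hn0 : (n : ℚ) ≠ 0 := Nat.cast_ne_zero.mpr (by omega)
  constructor
  · intro ht
    simp only [Tfin, Finset.mem_image, Finset.mem_range] at ht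
    obtain ⟨k, hk, rfl⟩ := ht
    rw [nsmul_coe, coe_eq_zero]
    exact ⟨k, by rw [nsmul_eq_mul]; push_cast; field_simp⟩
  · intro ht
    obtain ⟨q, rfl⟩ := Quotient.exists_rep t
    rw [show (Quotient.mk _ q : AddCircle (1:ℚ)) = (q : AddCircle (1:ℚ)) from rfl] at *
    rw [nsmul_coe, coe_eq_zero] at ht
    obtain ⟨m, hm⟩ := ht
    simp only [Tfin, Finset.mem_image, Finset.mem_range]
    have h1 : (0:ℤ) < n := by exact_mod_cast Nat.pos_of_ne_zero (by omega)
    have h2 : (0:ℤ) ≤ m % n := Int.emod_nonneg m (by omega)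
    refine ⟨(m % n).toNat, ?_, ?_⟩
    · have := Int.emod_lt_of_pos m h1
      omega
    · have htn : (((m % n).toNat : ℤ) : ℚ) = ((m % n : ℤ) : ℚ) := by
        exact_mod_cast congrArg (fun z : ℤ => (z : ℚ)) (Int.toNat_of_nonneg h2)
      have hq : q = (m : ℚ) / n := by
        rw [nsmul_eq_mul] at hm
        field_simp
        linarith [hm]
      have hz : (((((m % n).toNat : ℚ) / n : ℚ) - q : ℚ) : AddCircle (1:ℚ)) = 0 := by
        rw [coe_eq_zero]
        refine ⟨-(m / n), ?_⟩
        have hde := Int.mul_ediv_add_emod m n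
        have hdq : ((n : ℤ) : ℚ) * ((m / n : ℤ) : ℚ) + ((m % n : ℤ) : ℚ) = (m : ℚ) := by
          exact_mod_cast congrArg (fun z : ℤ => (z : ℚ)) hde
        rw [hq]
        push_cast at htn hdq ⊢
        rw [htn]
        field_simp
        linarith [hdq]
      rw [coe_sub, sub_eq_zero] at hz
      exact hz

section Chi

variable (n : ℕ) (χ : BC.A →ₐ[ℚ] ℂ)

/-- The character sum over the `n`-torsion. -/
noncomputable def S : ℂ := ∑ t ∈ Tfin n, χ (AddMonoidAlgebra.single t (1:ℚ))

lemma chi_add (a b : AddCircle (1:ℚ)) :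
    χ (single (a + b) (1:ℚ)) = χ (single a 1) * χ (single b 1) := by
  rw [← map_mul, AddMonoidAlgebra.single_mul_single, one_mul]

lemma chi_zero : χ (single (0 : AddCircle (1:ℚ)) (1:ℚ)) = 1 := by
  have : (single (0 : AddCircle (1:ℚ)) (1:ℚ)) = 1 := rfl
  rw [this, map_one]

/-- If `χ(e_{1/n}) = 1` then `χ(e_t) = 1` for every `n`-torsion point `t`. -/
lemma chi_torsion {n : ℕ} (hn : 1 ≤ n) (χ : BC.A →ₐ[ℚ] ℂ)
    (h : χ (single ((((n : ℚ)⁻¹ : ℚ) : AddCircle (1 : ℚ))) (1:ℚ)) = 1)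
    {t : AddCircle (1:ℚ)} (ht : n • t = 0) : χ (single t (1:ℚ)) = 1 := by
  have := (mem_Tfin hn).mpr ht
  simp only [Tfin, Finset.mem_image, Finset.mem_range] at this
  obtain ⟨k, hk, rfl⟩ := this
  have hsm : k • ((((n : ℚ)⁻¹ : ℚ) : AddCircle (1:ℚ))) = (((k:ℚ) / n : ℚ) : AddCircle (1:ℚ)) := by
    rw [nsmul_coe]
    congr 1
  have hp : (single ((((n : ℚ)⁻¹ : ℚ) : AddCircle (1 : ℚ))) (1:ℚ)) ^ k
      = single ((((k:ℚ) / n : ℚ) : AddCircle (1:ℚ))) (1:ℚ) := by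
    rw [AddMonoidAlgebra.single_pow, one_pow, hsm]
  rw [← hp, map_pow, h, one_pow]

/-- translation invariance of the torsion character sum -/
lemma chi_shift {n : ℕ} (hn : 1 ≤ n) (χ : BC.A →ₐ[ℚ] ℂ) {t₀ : AddCircle (1:ℚ)}
    (ht₀ : n • t₀ = 0) :
    χ (single t₀ (1:ℚ)) * S n χ = S n χ := by
  rw [S, Finset.mul_sum]
  calc ∑ t ∈ Tfin n, χ (single t₀ (1:ℚ)) * χ (single t 1)
      = ∑ t ∈ Tfin n, χ (single (t₀ + t) (1:ℚ)) := by
        refine Finset.sum_congr rfl fun t _ => ?_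
        rw [chi_add]
    _ = ∑ t ∈ Tfin n, χ (single t (1:ℚ)) := by
        refine Finset.sum_equiv (Equiv.addLeft t₀) (fun t => ?_) (fun t _ => rfl)
        simp only [Equiv.coe_addLeft, mem_Tfin hn, smul_add, ht₀, zero_add]

lemma rho_single (n : ℕ) (r : AddCircle (1:ℚ)) (a : ℚ) :
    BC.rho n (single r a) =
      a • ((n : ℚ)⁻¹ • ∑ᶠ (s : AddCircle (1 : ℚ)) (_ : n • s = r), single s (1 : ℚ)) := by
  rw [BC.rho, LinearMap.comp_apply, LinearEquiv.coe_coe, AddMonoidAlgebra.coeffLinearEquiv_apply, AddMonoidAlgebra.coeff_single]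
  erw [Finsupp.lift_apply, Finsupp.sum_single_index]
  simp

/-- The key computation of `χ (ρₙ (e_r))`. -/
lemma chi_rho_single {n : ℕ} (hn : 1 ≤ n) (χ : BC.A →ₐ[ℚ] ℂ) {r s₀ : AddCircle (1:ℚ)}
    (hs₀ : n • s₀ = r) :
    χ (BC.rho n (single r (1:ℚ))) = ((n:ℚ)⁻¹ : ℂ) * (χ (single s₀ (1:ℚ)) * S n χ) := by
  have hset : {s : AddCircle (1:ℚ) | n • s = r}
      = ↑((Tfin n).image (fun t => s₀ + t)) := by
    ext s
    simp only [Set.mem_setOf_eq, Finset.coe_image, Set.mem_image, Finset.mem_coe,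
      mem_Tfin hn]
    constructor
    · intro hs
      refine ⟨s - s₀, ?_, by abel⟩
      rw [smul_sub, hs, hs₀, sub_self]
    · rintro ⟨t, ht, rfl⟩
      rw [smul_add, ht, hs₀, add_zero]
  have h2 : (∑ᶠ (s : AddCircle (1 : ℚ)) (_ : n • s = r), single s (1 : ℚ))
      = ∑ s ∈ (Tfin n).image (fun t => s₀ + t), single s (1:ℚ) := by
    rw [← finsum_mem_coe_finset]
    have : (∑ᶠ (s : AddCircle (1 : ℚ)) (_ : n • s = r), single s (1 : ℚ))
        = ∑ᶠ s ∈ {s : AddCircle (1:ℚ) | n • s = r}, single s (1:ℚ) := rfl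
    rw [this, hset]
  rw [rho_single, one_smul, h2, map_smul, Rat.smul_def, map_sum]
  have h3 : ∑ s ∈ (Tfin n).image (fun t => s₀ + t), χ (single s (1:ℚ))
      = ∑ t ∈ Tfin n, χ (single (s₀ + t) (1:ℚ)) := by
    rw [Finset.sum_image]
    intro x _ y _ h
    exact add_left_cancel h
  rw [h3]
  have h4 : ∑ t ∈ Tfin n, χ (single (s₀ + t) (1:ℚ))
      = χ (single s₀ (1:ℚ)) * S n χ := by
    rw [S, Finset.mul_sum]
    exact Finset.sum_congr rfl fun t _ => chi_add χ s₀ t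
  rw [h4]
  push_cast
  ring

lemma chi_rho_zero_iff {n : ℕ} (hn : 1 ≤ n) (χ : BC.A →ₐ[ℚ] ℂ) :
    (∀ x : BC.A, χ (BC.rho n x) = 0) ↔ S n χ = 0 := by
  have hn0 : ((n:ℚ) : ℂ) ≠ 0 := by
    push_cast
    exact_mod_cast Nat.cast_ne_zero.mpr (by omega)
  constructor
  · intro h
    have h0 : n • (0 : AddCircle (1:ℚ)) = 0 := smul_zero n
    have := chi_rho_single hn χ h0
    rw [h, chi_zero, one_mul] at this
    rcases mul_eq_zero.mp this.symm with h' | h'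
    · exact absurd h' (inv_ne_zero (by push_cast; exact hn0))
    · exact h'
  · intro hS x
    induction x using AddMonoidAlgebra.induction_linear with
    | zero => simp
    | add a b ha hb => rw [map_add, map_add, ha, hb, add_zero]
    | single r a =>
      have hr : ∃ s₀ : AddCircle (1:ℚ), n • s₀ = r := by
        obtain ⟨q, rfl⟩ := Quotient.exists_rep r
        refine ⟨((q / n : ℚ) : AddCircle (1:ℚ)), ?_⟩
        rw [show (Quotient.mk _ q : AddCircle (1:ℚ)) = (q : AddCircle (1:ℚ)) from rfl]
        rw [nsmul_coe]
        congr 1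
        rw [nsmul_eq_mul]
        field_simp
      obtain ⟨s₀, hs₀⟩ := hr
      have hs : (single r a : BC.A) = a • single r (1:ℚ) := by
        rw [AddMonoidAlgebra.smul_single, smul_eq_mul, mul_one]
      rw [hs, map_smul, map_smul, chi_rho_single hn χ hs₀, hS, mul_zero, mul_zero, smul_zero]

lemma S_ne_zero_of_all_one {n : ℕ} (hn : 1 ≤ n) (χ : BC.A →ₐ[ℚ] ℂ)
    (h : ∀ t : AddCircle (1:ℚ), n • t = 0 → χ (single t (1:ℚ)) = 1) :
    S n χ ≠ 0 := by
  have : S n χ = (Tfin n).card := by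
    rw [S]
    rw [Finset.sum_congr rfl fun t ht => h t ((mem_Tfin hn).mp ht)]
    simp
  rw [this]
  have h0 : (0 : AddCircle (1:ℚ)) ∈ Tfin n := (mem_Tfin hn).mpr (smul_zero n)
  have hc : 0 < (Tfin n).card := Finset.card_pos.mpr ⟨0, h0⟩
  exact_mod_cast Nat.cast_ne_zero.mpr hc.ne'

end Chi

end BCAux

open BCAux in
theorem BC.comp_rho_ne_zero_iff (n : ℕ) (hn : 1 ≤ n) (χ : BC.A →ₐ[ℚ] ℂ) :
    ((¬ ∀ x : BC.A, χ (BC.rho n x) = 0) ↔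
      χ (AddMonoidAlgebra.single ((((n : ℚ)⁻¹ : ℚ) : AddCircle (1 : ℚ))) (1 : ℚ)) = 1) ∧
    ((¬ ∀ x : BC.A, χ (BC.rho n x) = 0) ↔
      ∀ s : AddCircle (1 : ℚ), n • s = 0 →
        χ (AddMonoidAlgebra.single s (1 : ℚ)) = 1) := by
  have hiffS : (¬ ∀ x : BC.A, χ (BC.rho n x) = 0) ↔ S n χ ≠ 0 :=
    not_congr (chi_rho_zero_iff hn χ)
  have hSall : S n χ ≠ 0 → ∀ s : AddCircle (1:ℚ), n • s = 0 →
      χ (AddMonoidAlgebra.single s (1:ℚ)) = 1 := by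
    intro hS s hs
    have := chi_shift hn χ hs
    have h2 : (χ (single s (1:ℚ)) - 1) * S n χ = 0 := by
      rw [sub_mul, one_mul, this, sub_self]
    rcases mul_eq_zero.mp h2 with h' | h'
    · linear_combination h'
    · exact absurd h' hS
  have hinv : n • ((((n : ℚ)⁻¹ : ℚ) : AddCircle (1:ℚ))) = 0 := by
    rw [nsmul_coe, coe_eq_zero]
    refine ⟨1, ?_⟩
    rw [nsmul_eq_mul]
    have : (n:ℚ) ≠ 0 := Nat.cast_ne_zero.mpr (by omega)
    field_simp
    norm_num
  constructor
  · constructor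
    · intro h
      exact hSall (hiffS.mp h) _ hinv
    · intro h
      exact hiffS.mpr (S_ne_zero_of_all_one hn χ (fun t ht => chi_torsion hn χ h ht))
  · constructor
    · intro h
      exact hSall (hiffS.mp h)
    · intro h
      exact hiffS.mpr (S_ne_zero_of_all_one hn χ h)
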